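/- Let R be a semiprime ring and L a Lie ideal of R that is not abelian (i.e., [L, L] ≠ 0). Then for every integer m > 1, L^m contains a nonzero (two-sided) ideal of R; precisely, the ideal generated by [L^{m-1}, L^m] is nonzero and contained in L^m. -/
import Mathlib


/-- The additive subgroup generated by commutators `a*b - b*a` with `a ∈ A`, `b ∈ B`. -/
def commSG (R : Type*) [NonUnitalRing R] (A B : Set R) : AddSubgroup R :=
  AddSubgroup.closure {x | ∃ a ∈ A, ∃ b ∈ B, x = a * b - b * a}

/-- The additive subgroup generated by products `a*b` with `a ∈ A`, `b ∈ B`. -/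
def prodSG (R : Type*) [NonUnitalRing R] (A B : Set R) : AddSubgroup R :=
  AddSubgroup.closure {x | ∃ a ∈ A, ∃ b ∈ B, x = a * b}

/-- `L` is a Lie ideal of `R`. -/
def IsLieIdeal (R : Type*) [NonUnitalRing R] (L : AddSubgroup R) : Prop :=
  ∀ a ∈ L, ∀ r : R, a * r - r * a ∈ L

/-- `sgPow R L n` is the additive subgroup `L^(n+1)` generated by products of `n+1`
elements of `L`. -/
def sgPow (R : Type*) [NonUnitalRing R] (L : AddSubgroup R) : ℕ → AddSubgroup R
  | 0 => L
  | n + 1 => prodSG R (sgPow R L n) L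

/-- `R` is a semiprime ring. -/
def IsSemiprimeRing (R : Type*) [NonUnitalRing R] : Prop :=
  ∀ a : R, (∀ x : R, a * x * a = 0) → a = 0

/-- `R` is a prime ring. -/
def IsPrimeRing (R : Type*) [NonUnitalRing R] : Prop :=
  ∀ a b : R, (∀ x : R, a * x * b = 0) → a = 0 ∨ b = 0

namespace Stmt11Aux

variable {R : Type*} [NonUnitalRing R] {L : AddSubgroup R}

/-- generator membership in `sgPow (n+1)` -/
lemma mul_mem_succ {n : ℕ} {a l : R} (ha : a ∈ sgPow R L n) (hl : l ∈ L) :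
    a * l ∈ sgPow R L (n + 1) :=
  AddSubgroup.subset_closure ⟨a, ha, l, hl, rfl⟩

/-- induction principle for `sgPow (n+1)` -/
lemma sgPow_succ_induction {n : ℕ} {p : R → Prop} {v : R}
    (hv : v ∈ sgPow R L (n + 1))
    (mem : ∀ a ∈ sgPow R L n, ∀ l ∈ L, p (a * l))
    (zero : p 0)
    (add : ∀ x y, p x → p y → p (x + y))
    (neg : ∀ x, p x → p (-x)) :
    p v := by
  have hv' : v ∈ AddSubgroup.closure
      {x : R | ∃ a ∈ (sgPow R L n : Set R), ∃ b ∈ (L : Set R), x = a * b} := hv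
  refine AddSubgroup.closure_induction (p := fun x _ => p x) ?_ zero
    (fun x y _ _ hx hy => add x y hx hy) (fun x _ hx => neg x hx) hv'
  rintro x ⟨a, ha, l, hl, rfl⟩
  exact mem a ha l hl

/-- products multiply degrees -/
lemma mul_mem_sgPow : ∀ (b : ℕ) {a : ℕ} {x y : R}, x ∈ sgPow R L a → y ∈ sgPow R L b →
    x * y ∈ sgPow R L (a + b + 1) := by
  intro b
  induction b with
  | zero => intro a x y hx hy; exact mul_mem_succ hx hy
  | succ b ih =>
    intro a x y hx hy
    refine sgPow_succ_induction hy (p := fun y => x * y ∈ sgPow R L (a + (b + 1) + 1))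
      ?_ ?_ ?_ ?_
    · intro z hz l hl
      rw [← mul_assoc]
      exact mul_mem_succ (ih hx hz) hl
    · show x * 0 ∈ _
      rw [mul_zero]; exact zero_mem _
    · intro c d hc hd; rw [mul_add]; exact add_mem hc hd
    · intro c hc; rw [mul_neg]; exact neg_mem hc

/-- each power is a Lie ideal -/
lemma sgPow_lie (hL : IsLieIdeal R L) : ∀ n, IsLieIdeal R (sgPow R L n) := by
  intro n
  induction n with
  | zero => exact hL
  | succ n ih =>
    intro v hv r
    refine sgPow_succ_induction hv (p := fun v => v * r - r * v ∈ sgPow R L (n + 1))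
      ?_ ?_ ?_ ?_
    · intro a ha l hl
      have hid : a * l * r - r * (a * l)
          = a * (l * r - r * l) + (a * r - r * a) * l := by
        simp only [mul_sub, sub_mul, mul_assoc]; abel
      rw [hid]
      exact add_mem (mul_mem_succ ha (hL l hl r)) (mul_mem_succ (ih a ha r) hl)
    · show (0:R) * r - r * 0 ∈ _
      simpa using zero_mem (sgPow R L (n + 1))
    · intro x y hx hy
      have hid : (x + y) * r - r * (x + y) = (x * r - r * x) + (y * r - r * y) := by
        simp only [add_mul, mul_add]; abel
      rw [hid]; exact add_mem hx hy
    · intro x hx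
      have hid : (-x) * r - r * (-x) = -(x * r - r * x) := by
        simp only [neg_mul, mul_neg]; abel
      rw [hid]; exact neg_mem hx

/-- Claim C: `A * [L^k, R] ⊆ A*L` where `A = sgPow n`. -/
lemma claimC (hL : IsLieIdeal R L) (n : ℕ) :
    ∀ (k : ℕ) (u : R), u ∈ sgPow R L n → ∀ w ∈ sgPow R L k, ∀ x : R,
      u * (w * x - x * w) ∈ sgPow R L (n + 1) := by
  intro k
  induction k with
  | zero =>
    intro u hu w hw x
    exact mul_mem_succ hu (hL w hw x)
  | succ k ih =>
    intro u hu w hw x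
    refine sgPow_succ_induction hw
      (p := fun w => u * (w * x - x * w) ∈ sgPow R L (n + 1)) ?_ ?_ ?_ ?_
    · intro z hz l hl
      have hid : u * (z * l * x - x * (z * l))
          = u * (z * (l * x) - (l * x) * z) + u * (l * (x * z) - (x * z) * l) := by
        simp only [mul_sub, sub_mul, mul_assoc]; abel
      rw [hid]
      exact add_mem (ih u hu z hz (l * x)) (mul_mem_succ hu (hL l hl (x * z)))
    · show u * ((0:R) * x - x * 0) ∈ _
      simpa using zero_mem (sgPow R L (n + 1))
    · intro c d hc hd
      have hid : u * ((c + d) * x - x * (c + d))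
          = u * (c * x - x * c) + u * (d * x - x * d) := by
        simp only [mul_sub, sub_mul, mul_add, add_mul, mul_assoc]; abel
      rw [hid]; exact add_mem hc hd
    · intro c hc
      have hid : u * ((-c) * x - x * (-c)) = -(u * (c * x - x * c)) := by
        simp only [mul_sub, sub_mul, mul_neg, neg_mul]; abel
      rw [hid]; exact neg_mem hc

/-- The key lemma: `[A, B] * R ⊆ B` where `A = sgPow n`, `B = sgPow (n+1)`. -/
lemma comm_mul_right_mem (hL : IsLieIdeal R L) (n : ℕ) :
    ∀ u ∈ sgPow R L n, ∀ v ∈ sgPow R L (n + 1), ∀ s : R,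
      (u * v - v * u) * s ∈ sgPow R L (n + 1) := by
  intro u hu v hv s
  refine sgPow_succ_induction hv
    (p := fun v => (u * v - v * u) * s ∈ sgPow R L (n + 1)) ?_ ?_ ?_ ?_
  · intro a ha l hl
    have hid : (u * (a * l) - (a * l) * u) * s
        = u * (a * (l * s) - (l * s) * a)
          + (u * (l * (s * a) - (s * a) * l)
            - (a * (l * (u * s) - (u * s) * l)
              + (a * (u * s) - (u * s) * a) * l)) := by
      simp only [mul_sub, sub_mul, mul_assoc]; abel
    rw [hid]
    refine add_mem ?_ (sub_mem ?_ (add_mem ?_ ?_))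
    · exact claimC hL n n u hu a ha (l * s)
    · exact mul_mem_succ hu (hL l hl (s * a))
    · exact mul_mem_succ ha (hL l hl (u * s))
    · exact mul_mem_succ (sgPow_lie hL n a ha (u * s)) hl
  · show (u * 0 - 0 * u) * s ∈ _
    simpa using zero_mem (sgPow R L (n + 1))
  · intro c d hc hd
    have hid : (u * (c + d) - (c + d) * u) * s
        = (u * c - c * u) * s + (u * d - d * u) * s := by
      simp only [mul_sub, sub_mul, mul_add, add_mul]; abel
    rw [hid]; exact add_mem hc hd
  · intro c hc
    have hid : (u * (-c) - (-c) * u) * s = -((u * c - c * u) * s) := by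
      simp only [mul_neg, neg_mul, sub_mul, mul_sub]; abel
    rw [hid]; exact neg_mem hc

/-- membership of a commutator `[u,v]`, `u ∈ A`, `v ∈ B`, in `B`. -/
lemma comm_mem (hL : IsLieIdeal R L) (n : ℕ) {u v : R}
    (hu : u ∈ sgPow R L n) (hv : v ∈ sgPow R L (n + 1)) :
    u * v - v * u ∈ sgPow R L (n + 1) := by
  have h := sgPow_lie hL (n + 1) v hv u
  have : u * v - v * u = -(v * u - u * v) := by abel
  rw [this]; exact neg_mem h

lemma comm_mul_left_mem (hL : IsLieIdeal R L) (n : ℕ) {u v : R}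
    (hu : u ∈ sgPow R L n) (hv : v ∈ sgPow R L (n + 1)) (r : R) :
    r * (u * v - v * u) ∈ sgPow R L (n + 1) := by
  set c := u * v - v * u with hc
  have h1 : c * r ∈ sgPow R L (n + 1) := comm_mul_right_mem hL n u hu v hv r
  have h2 : c * r - r * c ∈ sgPow R L (n + 1) :=
    sgPow_lie hL (n + 1) c (comm_mem hL n hu hv) r
  have : r * c = c * r - (c * r - r * c) := by abel
  rw [this]; exact sub_mem h1 h2

lemma comm_mul_both_mem (hL : IsLieIdeal R L) (n : ℕ) {u v : R}
    (hu : u ∈ sgPow R L n) (hv : v ∈ sgPow R L (n + 1)) (r s : R) :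
    r * (u * v - v * u) * s ∈ sgPow R L (n + 1) := by
  have hid : r * (u * v - v * u) * s
      = (u * v - v * u) * (r * s)
        - (((u * r - r * u) * v - v * (u * r - r * u)) * s
          + ((u * (v * r - r * v) - (v * r - r * v) * u) * s)) := by
    simp only [mul_sub, sub_mul, mul_assoc]; abel
  rw [hid]
  refine sub_mem ?_ (add_mem ?_ ?_)
  · exact comm_mul_right_mem hL n u hu v hv (r * s)
  · exact comm_mul_right_mem hL n _ (sgPow_lie hL n u hu r) v hv s
  · exact comm_mul_right_mem hL n u hu _ (sgPow_lie hL (n + 1) v hv r) s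

/-- The auxiliary two-sided ideal of elements trapped in `B`. -/
def trapped (L : AddSubgroup R) (n : ℕ) : TwoSidedIdeal R :=
  TwoSidedIdeal.mk'
    {x : R | x ∈ sgPow R L (n + 1) ∧ (∀ r : R, r * x ∈ sgPow R L (n + 1))
      ∧ (∀ s : R, x * s ∈ sgPow R L (n + 1))
      ∧ (∀ r s : R, r * x * s ∈ sgPow R L (n + 1))}
    (by refine ⟨zero_mem _, ?_, ?_, ?_⟩ <;> intros <;> simp [zero_mem])
    (by
      rintro x y ⟨h1, h2, h3, h4⟩ ⟨g1, g2, g3, g4⟩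
      refine ⟨add_mem h1 g1, fun r => ?_, fun s => ?_, fun r s => ?_⟩
      · rw [mul_add]; exact add_mem (h2 r) (g2 r)
      · rw [add_mul]; exact add_mem (h3 s) (g3 s)
      · rw [mul_add, add_mul]; exact add_mem (h4 r s) (g4 r s))
    (by
      rintro x ⟨h1, h2, h3, h4⟩
      refine ⟨neg_mem h1, fun r => ?_, fun s => ?_, fun r s => ?_⟩
      · rw [mul_neg]; exact neg_mem (h2 r)
      · rw [neg_mul]; exact neg_mem (h3 s)
      · rw [mul_neg, neg_mul]; exact neg_mem (h4 r s))
    (by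
      rintro x y ⟨h1, h2, h3, h4⟩
      refine ⟨h2 x, fun r => ?_, fun s => ?_, fun r s => ?_⟩
      · rw [← mul_assoc]; exact h2 (r * x)
      · exact h4 x s
      · rw [← mul_assoc]; exact h4 (r * x) s)
    (by
      rintro x y ⟨h1, h2, h3, h4⟩
      refine ⟨h3 y, fun r => ?_, fun s => ?_, fun r s => ?_⟩
      · rw [← mul_assoc]; exact h4 r y
      · rw [mul_assoc]; exact h3 (y * s)
      · have e : r * (x * y) * s = r * x * (y * s) := by simp only [mul_assoc]
        rw [e]; exact h4 r (y * s))

lemma mem_trapped_iff {n : ℕ} {x : R} :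
    x ∈ trapped L n ↔ x ∈ sgPow R L (n + 1) ∧ (∀ r : R, r * x ∈ sgPow R L (n + 1))
      ∧ (∀ s : R, x * s ∈ sgPow R L (n + 1))
      ∧ (∀ r s : R, r * x * s ∈ sgPow R L (n + 1)) := by
  rw [trapped, TwoSidedIdeal.mem_mk']
  rfl

/-- the containment half of the theorem -/
lemma span_subset (hL : IsLieIdeal R L) (n : ℕ) :
    (TwoSidedIdeal.span
        ((commSG R ((sgPow R L n : AddSubgroup R) : Set R)
          ((sgPow R L (n + 1) : AddSubgroup R) : Set R) : AddSubgroup R) : Set R) : Set R)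
      ⊆ ((sgPow R L (n + 1) : AddSubgroup R) : Set R) := by
  intro x hx
  have hsub : ((commSG R ((sgPow R L n : AddSubgroup R) : Set R)
      ((sgPow R L (n + 1) : AddSubgroup R) : Set R) : AddSubgroup R) : Set R)
      ⊆ (trapped L n : Set R) := by
    intro y hy
    have hy' : y ∈ AddSubgroup.closure {x : R | ∃ a ∈ (sgPow R L n : Set R),
        ∃ b ∈ (sgPow R L (n + 1) : Set R), x = a * b - b * a} := hy
    rw [SetLike.mem_coe]
    refine AddSubgroup.closure_induction (p := fun z _ => z ∈ trapped L n) ?_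
      (zero_mem _) (fun a b _ _ ha hb => add_mem ha hb) (fun a _ ha => neg_mem ha) hy'
    rintro z ⟨u, hu, v, hv, rfl⟩
    rw [mem_trapped_iff]
    exact ⟨comm_mem hL n hu hv, fun r => comm_mul_left_mem hL n hu hv r,
      fun s => comm_mul_right_mem hL n u hu v hv s,
      fun r s => comm_mul_both_mem hL n hu hv r s⟩
  have hxT : x ∈ trapped L n := by
    have := TwoSidedIdeal.mem_span_iff.mp hx (trapped L n) hsub
    exact this
  exact (mem_trapped_iff.mp hxT).1

/-- The semiprime ladder. -/
lemma ladder (hR : IsSemiprimeRing R) (w : R)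
    (h2 : w * w = 0) (h1 : ∀ r : R, w * (w * r - r * w) = 0) : w = 0 := by
  refine hR w (fun r => ?_)
  have hid : w * r * w = w * w * r - w * (w * r - r * w) := by
    simp only [mul_sub, mul_assoc]; abel
  rw [hid, h2, h1 r, zero_mul, sub_zero]

/-- Step A: if `[A, B] = 0` then `[L, A] = 0`. -/
lemma stepA (hR : IsSemiprimeRing R) (hL : IsLieIdeal R L) (n : ℕ)
    (h : ∀ u ∈ sgPow R L n, ∀ v ∈ sgPow R L (n + 1), u * v - v * u = 0) :
    ∀ x ∈ L, ∀ v ∈ sgPow R L n, x * v - v * x = 0 := by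
  intro x hx v hv
  set w := x * v - v * x with hw
  -- w ∈ A
  have hwA : w ∈ sgPow R L n := by
    have := sgPow_lie hL n v hv x
    have e : w = -(v * x - x * v) := by rw [hw]; abel
    rw [e]; exact neg_mem this
  -- w ∈ B
  have hwB : w ∈ sgPow R L (n + 1) := by
    have h1 : x * v ∈ sgPow R L (0 + n + 1) := mul_mem_sgPow n (a := 0) (show x ∈ sgPow R L 0 from hx) hv
    have h2 : v * x ∈ sgPow R L (n + 0 + 1) := mul_mem_sgPow 0 hv (show x ∈ sgPow R L 0 from hx)
    rw [Nat.zero_add] at h1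
    exact sub_mem h1 h2
  -- absorption
  have habs : ∀ c : R, c ∈ sgPow R L n → c ∈ sgPow R L (n + 1) → w * c = 0 := by
    intro c hcA hcB
    have hxc : x * c ∈ sgPow R L (n + 1) := by
      have := mul_mem_sgPow n (a := 0) (show x ∈ sgPow R L 0 from hx) hcA; rwa [Nat.zero_add] at this
    have e : w * c = x * (v * c - c * v) - (v * (x * c) - (x * c) * v) := by
      rw [hw]; simp only [mul_sub, sub_mul, mul_assoc]; abel
    rw [e, h v hv c hcB, h v hv (x * c) hxc, mul_zero, sub_zero]
  refine ladder hR w (habs w hwA hwB) (fun r => ?_)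
  exact habs _ (sgPow_lie hL n w hwA r) (sgPow_lie hL (n + 1) w hwB r)

/-- Step B: if `[L, L^{j+2}] = 0` then `[L, L^{j+1}] = 0`. -/
lemma stepB (hR : IsSemiprimeRing R) (hL : IsLieIdeal R L) (j : ℕ)
    (h : ∀ x ∈ L, ∀ γ ∈ sgPow R L (j + 1), x * γ - γ * x = 0) :
    ∀ x ∈ L, ∀ δ ∈ sgPow R L j, x * δ - δ * x = 0 := by
  intro x hx δ hδ
  set w := x * δ - δ * x with hw
  have hwL : w ∈ L := hL x hx δ
  have hwB : w ∈ sgPow R L (j + 1) := by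
    have h1 : x * δ ∈ sgPow R L (0 + j + 1) := mul_mem_sgPow j (a := 0) (show x ∈ sgPow R L 0 from hx) hδ
    have h2 : δ * x ∈ sgPow R L (j + 0 + 1) := mul_mem_sgPow 0 hδ (show x ∈ sgPow R L 0 from hx)
    rw [Nat.zero_add] at h1
    exact sub_mem h1 h2
  have habs : ∀ c : R, c ∈ L → c ∈ sgPow R L (j + 1) → w * c = 0 := by
    intro c hcL hcB
    have hdc : δ * c ∈ sgPow R L (j + 1) := by
      have := mul_mem_sgPow 0 hδ (show c ∈ sgPow R L 0 from hcL); exact this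
    have e : w * c = (x * (δ * c) - (δ * c) * x) - δ * (x * c - c * x) := by
      rw [hw]; simp only [mul_sub, sub_mul, mul_assoc]; abel
    rw [e, h x hx (δ * c) hdc, h x hx c hcB, mul_zero, zero_sub, neg_zero]
  refine ladder hR w (habs w hwL hwB) (fun r => ?_)
  exact habs _ (hL w hwL r) (sgPow_lie hL (j + 1) w hwB r)

/-- descending chain -/
lemma descend (hR : IsSemiprimeRing R) (hL : IsLieIdeal R L) :
    ∀ j : ℕ, (∀ x ∈ L, ∀ γ ∈ sgPow R L j, x * γ - γ * x = 0) →
      ∀ a ∈ L, ∀ b ∈ L, a * b - b * a = 0 := by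
  intro j
  induction j with
  | zero => intro h a ha b hb; exact h a ha b hb
  | succ j ih => intro h; exact ih (stepB hR hL j h)

end Stmt11Aux

open Stmt11Aux

/-- semiprime ring, non-abelian Lie ideal L, m > 1: the ideal generated by
[L^{m-1}, L^m] is nonzero and contained in L^m. -/
theorem stmt11 (R : Type*) [NonUnitalRing R] (hR : IsSemiprimeRing R)
    (L : AddSubgroup R) (hL : IsLieIdeal R L)
    (hab : ∃ a ∈ L, ∃ b ∈ L, a * b ≠ b * a) (m : ℕ) (hm : 1 < m) :
    TwoSidedIdeal.span
        ((commSG R ((sgPow R L (m - 2) : AddSubgroup R) : Set R)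
            ((sgPow R L (m - 1) : AddSubgroup R) : Set R) : AddSubgroup R) : Set R) ≠ ⊥ ∧
    (TwoSidedIdeal.span
        ((commSG R ((sgPow R L (m - 2) : AddSubgroup R) : Set R)
            ((sgPow R L (m - 1) : AddSubgroup R) : Set R) : AddSubgroup R) : Set R) : Set R)
      ⊆ ((sgPow R L (m - 1) : AddSubgroup R) : Set R) := by
  set n := m - 2 with hn
  have hm2 : m - 1 = n + 1 := by omega
  rw [hm2]
  constructor
  · intro hbot
    have hcomm : ∀ u ∈ sgPow R L n, ∀ v ∈ sgPow R L (n + 1), u * v - v * u = 0 := by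
      intro u hu v hv
      have hgen : u * v - v * u ∈ ((commSG R ((sgPow R L n : AddSubgroup R) : Set R)
          ((sgPow R L (n + 1) : AddSubgroup R) : Set R) : AddSubgroup R) : Set R) :=
        AddSubgroup.subset_closure ⟨u, hu, v, hv, rfl⟩
      have hspan := TwoSidedIdeal.subset_span hgen
      rw [hbot] at hspan
      exact (TwoSidedIdeal.mem_bot R).mp hspan
    have hLA := stepA hR hL n hcomm
    have hfin := descend hR hL n hLA
    obtain ⟨a, ha, b, hb, hne⟩ := hab
    exact hne (sub_eq_zero.mp (hfin a ha b hb))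
  · exact span_subset hL n
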